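/- Let N be a squarefree positive integer, let a be a positive divisor of N, and let s ∈ ℂ be such that for every prime p dividing N one has p^{2(1−s)} ≠ 1 and p^{1−s} ≠ −1. For positive divisors a, b of N and w ∈ ℂ define ϱ_p(a, b; w) := (p−1)/(p^{2w} − 1) if (p ∣ a ↔ p ∣ b), and ϱ_p(a, b; w) := p^{w}·(1 − p^{1−2w})/(p^{2w} − 1) otherwise. Then Σ_{b ∣ N} ∏_{p ∣ N} ϱ_p(a, b; 1−s) = ∏_{p ∣ N} (p^{s} + 1)/(p^{1−s} + 1), where the sum runs over the positive divisors b of N and the products over primes p dividing N. -/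

import Mathlib

open Complex

/-- The local factor `ϱ_p(a, b; w)` of the scattering matrix entry attached to the
cusps `1/a` and `1/b` of `Γ₀(N)`. -/
noncomputable def rhoP (p a b : ℕ) (w : ℂ) : ℂ :=
  if p ∣ a ↔ p ∣ b then ((p : ℂ) - 1) / ((p : ℂ) ^ (2 * w) - 1)
  else (p : ℂ) ^ w * (1 - (p : ℂ) ^ (1 - 2 * w)) / ((p : ℂ) ^ (2 * w) - 1)

/-- The key local computation: the sum of the two possible values of `ϱ_p(a, b; 1-s)`
equals `(p^s + 1)/(p^{1-s} + 1)`. -/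
lemma stmt15_key (p : ℕ) (hp : p.Prime) (s : ℂ)
    (h1 : (p : ℂ) ^ (2 * (1 - s)) ≠ 1) (h2 : (p : ℂ) ^ (1 - s) ≠ -1) :
    ((p : ℂ) - 1) / ((p : ℂ) ^ (2 * (1 - s)) - 1)
      + (p : ℂ) ^ (1 - s) * (1 - (p : ℂ) ^ (1 - 2 * (1 - s)))
          / ((p : ℂ) ^ (2 * (1 - s)) - 1)
      = ((p : ℂ) ^ s + 1) / ((p : ℂ) ^ (1 - s) + 1) := by
  have hp0 : (p : ℂ) ≠ 0 := by exact_mod_cast hp.ne_zero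
  set x := (p : ℂ) ^ (1 - s) with hx
  set y := (p : ℂ) ^ s with hy
  have hx2 : (p : ℂ) ^ (2 * (1 - s)) = x * x := by
    rw [two_mul, cpow_add _ _ hp0]
  have hxy : x * y = (p : ℂ) := by
    rw [hx, hy, ← cpow_add _ _ hp0]; norm_num
  have h12 : (p : ℂ) ^ (1 - 2 * (1 - s)) = y * x⁻¹ := by
    rw [show (1 - 2 * (1 - s)) = s + -(1 - s) by ring, cpow_add _ _ hp0, cpow_neg]
  have hx0 : x ≠ 0 := left_ne_zero_of_mul (hxy ▸ hp0)
  have hd : x * x - 1 ≠ 0 := sub_ne_zero.mpr (hx2 ▸ h1)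
  have hx1 : x + 1 ≠ 0 := fun h => h2 (by linear_combination h)
  rw [hx2, h12, ← hxy]
  rw [← add_div, div_eq_div_iff hd hx1]
  field_simp
  ring

/-- Row sums of the scattering matrix: for squarefree `N`, `a ∣ N`,
`Σ_{b ∣ N} ∏_{p ∣ N} ϱ_p(a, b; 1−s) = ∏_{p ∣ N} (p^s + 1)/(p^{1−s} + 1)`. -/
theorem stmt15 (N : ℕ) (hN : 0 < N) (hNsq : Squarefree N)
    (a : ℕ) (ha0 : 0 < a) (ha : a ∣ N) (s : ℂ)
    (hs : ∀ p ∈ N.primeFactors,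
      (p : ℂ) ^ (2 * (1 - s)) ≠ 1 ∧ (p : ℂ) ^ (1 - s) ≠ -1) :
    (∑ b ∈ N.divisors, ∏ p ∈ N.primeFactors, rhoP p a b (1 - s))
      = ∏ p ∈ N.primeFactors, ((p : ℂ) ^ s + 1) / ((p : ℂ) ^ (1 - s) + 1) := by
  classical
  have hN0 : N ≠ 0 := hN.ne'
  set f : ℕ → ℂ := fun p => if p ∣ a then ((p:ℂ)-1)/((p:ℂ)^(2*(1-s))-1)
      else (p:ℂ)^(1-s)*(1-(p:ℂ)^(1-2*(1-s)))/((p:ℂ)^(2*(1-s))-1) with hf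
  set g : ℕ → ℂ := fun p => if p ∣ a then
      (p:ℂ)^(1-s)*(1-(p:ℂ)^(1-2*(1-s)))/((p:ℂ)^(2*(1-s))-1)
      else ((p:ℂ)-1)/((p:ℂ)^(2*(1-s))-1) with hg
  have step1 : (∑ b ∈ N.divisors, ∏ p ∈ N.primeFactors, rhoP p a b (1 - s))
      = ∑ S ∈ N.primeFactors.powerset,
          ∏ p ∈ N.primeFactors, rhoP p a (∏ q ∈ S, q) (1 - s) := by
    refine Finset.sum_nbij' (fun b => b.primeFactors) (fun S => ∏ q ∈ S, q)
      ?_ ?_ ?_ ?_ ?_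
    · intro b hb
      exact Finset.mem_powerset.mpr
        (Nat.primeFactors_mono (Nat.dvd_of_mem_divisors hb) hN0)
    · intro S hS
      refine Nat.mem_divisors.mpr ⟨?_, hN0⟩
      calc ∏ q ∈ S, q ∣ ∏ q ∈ N.primeFactors, q :=
            Finset.prod_dvd_prod_of_subset _ _ _ (Finset.mem_powerset.mp hS)
        _ = N := Nat.prod_primeFactors_of_squarefree hNsq
    · intro b hb
      exact Nat.prod_primeFactors_of_squarefree
        (hNsq.squarefree_of_dvd (Nat.dvd_of_mem_divisors hb))
    · intro S hS
      exact Nat.primeFactors_prod fun q hq =>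
        Nat.prime_of_mem_primeFactors (Finset.mem_powerset.mp hS hq)
    · intro b hb
      rw [Nat.prod_primeFactors_of_squarefree
        (hNsq.squarefree_of_dvd (Nat.dvd_of_mem_divisors hb))]
  rw [step1]
  have step2 : ∀ S ∈ N.primeFactors.powerset,
      (∏ p ∈ N.primeFactors, rhoP p a (∏ q ∈ S, q) (1 - s))
        = (∏ p ∈ S, f p) * ∏ p ∈ N.primeFactors \ S, g p := by
    intro S hS
    have hS' := Finset.mem_powerset.mp hS
    have hpw := Finset.prod_piecewise N.primeFactors S f g
    rw [Finset.inter_eq_right.mpr hS'] at hpw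
    rw [← hpw]
    refine Finset.prod_congr rfl fun p hp => ?_
    have hp' := Nat.prime_of_mem_primeFactors hp
    have hdvd : p ∣ (∏ q ∈ S, q) ↔ p ∈ S := by
      constructor
      · intro h
        obtain ⟨q, hq, hpq⟩ := (hp'.prime.dvd_finset_prod_iff _).mp h
        obtain rfl : q = p :=
          ((Nat.prime_of_mem_primeFactors (hS' hq)).dvd_iff_eq hp'.ne_one).mp hpq
        exact hq
      · exact Finset.dvd_prod_of_mem _
    by_cases hpS : p ∈ S <;> by_cases hpa : p ∣ a <;>
      simp [rhoP, hdvd, hpS, hpa, Finset.piecewise, hf, hg]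
  rw [Finset.sum_congr rfl step2, ← Finset.prod_add]
  refine Finset.prod_congr rfl fun p hp => ?_
  have hp' := Nat.prime_of_mem_primeFactors hp
  obtain ⟨h1, h2⟩ := hs p hp
  by_cases hpa : p ∣ a <;> simp only [hf, hg, hpa, if_pos, if_neg, if_true, if_false]
  · exact stmt15_key p hp' s h1 h2
  · rw [add_comm]; exact stmt15_key p hp' s h1 h2
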